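/- For every positive integer n ≥ 2, the number of ordered factorizations of n into pairwise coprime integers greater than 1 equals the ordered Bell number (Fubini number) a_{ω(n)}, the number of ordered set partitions of a set with ω(n) elements. -/

import Mathlib

open Real Finset Filter

/-- Number of unordered factorizations of `n` into parts `> 1`. -/
noncomputable def littlef (n : ℕ) : ℕ :=
  Nat.card {s : Multiset ℕ // s.prod = n ∧ ∀ a ∈ s, 1 < a}

/-- Number of unordered factorizations of `n` into pairwise coprime parts `> 1`. -/
noncomputable def bigF (n : ℕ) : ℕ :=
  Nat.card {s : Multiset ℕ // s.prod = n ∧ (∀ a ∈ s, 1 < a) ∧ s.Pairwise Nat.Coprime}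

/-- Number of ordered factorizations of `n` into parts `> 1`. -/
noncomputable def littleg (n : ℕ) : ℕ :=
  Nat.card {l : List ℕ // l.prod = n ∧ ∀ a ∈ l, 1 < a}

/-- Number of ordered factorizations of `n` into pairwise coprime parts `> 1`. -/
noncomputable def bigG (n : ℕ) : ℕ :=
  Nat.card {l : List ℕ // l.prod = n ∧ (∀ a ∈ l, 1 < a) ∧ l.Pairwise Nat.Coprime}

/-- The `k`-th Bell number: the number of set partitions of a `k`-element set. -/
noncomputable def bell (k : ℕ) : ℕ :=
  Nat.card (Finpartition (Finset.univ : Finset (Fin k)))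

/-- The `k`-th ordered Bell (Fubini) number: the number of ordered set partitions
of a `k`-element set, i.e. lists of pairwise disjoint nonempty blocks covering it. -/
noncomputable def fubini (k : ℕ) : ℕ :=
  Nat.card {l : List (Finset (Fin k)) //
    (∀ s ∈ l, s.Nonempty) ∧ l.Pairwise Disjoint ∧ l.foldr (· ∪ ·) ∅ = Finset.univ}

/-- `ω n`: the number of distinct prime factors of `n`. -/
def omegaN (n : ℕ) : ℕ := n.primeFactors.card

/-- `π(x, k)`: the number of `2 ≤ n ≤ x` with exactly `k` distinct prime factors. -/
noncomputable def piOmega (x : ℝ) (k : ℕ) : ℕ :=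
  Nat.card {n : ℕ // 2 ≤ n ∧ (n : ℝ) ≤ x ∧ omegaN n = k}

/-- `L(x) = exp(log x · log log log x / log log x)`. -/
noncomputable def Lfun (x : ℝ) : ℝ :=
  Real.exp (Real.log x * Real.log (Real.log (Real.log x)) / Real.log (Real.log x))

namespace OCF

noncomputable def pe (n : ℕ) : {p // p ∈ n.primeFactors} ≃ Fin (omegaN n) :=
  n.primeFactors.equivFin

noncomputable def pp (n : ℕ) (i : Fin (omegaN n)) : ℕ := ((pe n).symm i : ℕ)

lemma pp_mem (n : ℕ) (i : Fin (omegaN n)) : pp n i ∈ n.primeFactors := ((pe n).symm i).2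

lemma pp_prime (n : ℕ) (i : Fin (omegaN n)) : (pp n i).Prime :=
  Nat.prime_of_mem_primeFactors (pp_mem n i)

lemma pp_inj (n : ℕ) : Function.Injective (pp n) := fun i j h =>
  (pe n).symm.injective (Subtype.ext h)

lemma pp_fact_pos (n : ℕ) (i : Fin (omegaN n)) : 0 < n.factorization (pp n i) := by
  have h := pp_mem n i
  rw [← Nat.support_factorization, Finsupp.mem_support_iff] at h
  omega

noncomputable def blockF (n : ℕ) (a : ℕ) : Finset (Fin (omegaN n)) :=
  Finset.univ.filter (fun i => pp n i ∣ a)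

noncomputable def partF (n : ℕ) (S : Finset (Fin (omegaN n))) : ℕ :=
  ∏ i ∈ S, pp n i ^ n.factorization (pp n i)

lemma mem_blockF (n a : ℕ) (i : Fin (omegaN n)) : i ∈ blockF n a ↔ pp n i ∣ a := by
  simp [blockF]

lemma one_lt_ppow (n : ℕ) (i : Fin (omegaN n)) :
    1 < pp n i ^ n.factorization (pp n i) :=
  Nat.one_lt_pow (pp_fact_pos n i).ne' (pp_prime n i).one_lt

lemma partF_pos (n : ℕ) (S : Finset (Fin (omegaN n))) : 0 < partF n S :=
  Finset.prod_pos fun i _ => lt_trans Nat.zero_lt_one (one_lt_ppow n i)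

lemma one_lt_partF (n : ℕ) {S : Finset (Fin (omegaN n))} (h : S.Nonempty) :
    1 < partF n S := by
  obtain ⟨i, hi⟩ := h
  exact lt_of_lt_of_le (one_lt_ppow n i)
    (Nat.le_of_dvd (partF_pos n S) (Finset.dvd_prod_of_mem _ hi))

lemma blockF_partF (n : ℕ) (S : Finset (Fin (omegaN n))) : blockF n (partF n S) = S := by
  ext i
  rw [mem_blockF]
  constructor
  · intro h
    obtain ⟨j, hj, hdvd⟩ := ((pp_prime n i).prime.dvd_finset_prod_iff _).mp h
    have := ((Nat.prime_dvd_prime_iff_eq (pp_prime n i) (pp_prime n j)).mp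
      ((pp_prime n i).dvd_of_dvd_pow hdvd))
    rwa [pp_inj n this]
  · intro h
    exact dvd_trans (dvd_pow_self _ (pp_fact_pos n i).ne') (Finset.dvd_prod_of_mem _ h)

lemma coprime_partF (n : ℕ) {S T : Finset (Fin (omegaN n))} (h : Disjoint S T) :
    Nat.Coprime (partF n S) (partF n T) := by
  apply Nat.Coprime.prod_left
  intro i hi
  apply Nat.Coprime.prod_right
  intro j hj
  apply Nat.Coprime.pow
  refine (Nat.coprime_primes (pp_prime n i) (pp_prime n j)).mpr ?_
  intro he
  exact Finset.disjoint_left.mp h hi (pp_inj n he ▸ hj)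

lemma mem_foldr_union {β : Type*} [DecidableEq β] (L : List (Finset β)) (x : β) :
    x ∈ L.foldr (· ∪ ·) ∅ ↔ ∃ S ∈ L, x ∈ S := by
  induction L with
  | nil => simp
  | cons S T ih => simp [ih]

lemma prod_foldr (n : ℕ) (L : List (Finset (Fin (omegaN n)))) (hL : L.Pairwise Disjoint)
    (f : Fin (omegaN n) → ℕ) :
    ∏ i ∈ L.foldr (· ∪ ·) ∅, f i = (L.map fun S => ∏ i ∈ S, f i).prod := by
  induction L with
  | nil => simp
  | cons S T ih =>
    rw [List.pairwise_cons] at hL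
    have hd : Disjoint S (T.foldr (· ∪ ·) ∅) := by
      rw [Finset.disjoint_left]
      intro x hx hx'
      obtain ⟨U, hU, hxU⟩ := (mem_foldr_union T x).mp hx'
      exact Finset.disjoint_left.mp (hL.1 U hU) hx hxU
    simp [List.foldr_cons, Finset.prod_union hd, ih hL.2]

lemma prod_primeFactors (m : ℕ) (hm : m ≠ 0) :
    ∏ p ∈ m.primeFactors, p ^ m.factorization p = m := by
  rw [← Nat.support_factorization]
  exact Nat.factorization_prod_pow_eq_self hm

lemma prod_univ_pp (n : ℕ) (hn : n ≠ 0) :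
    ∏ i : Fin (omegaN n), pp n i ^ n.factorization (pp n i) = n := by
  have h1 : ∏ i : Fin (omegaN n), pp n i ^ n.factorization (pp n i)
      = ∏ x : {p // p ∈ n.primeFactors}, (x : ℕ) ^ n.factorization x :=
    Equiv.prod_comp (pe n).symm (fun x : {p // p ∈ n.primeFactors} => (x : ℕ) ^ n.factorization x)
  rw [h1, Finset.prod_coe_sort n.primeFactors (fun p => p ^ n.factorization p)]
  exact prod_primeFactors n hn

lemma partF_blockF (n a : ℕ) (hn : n ≠ 0) (ha : a ≠ 0) (had : a ∣ n)
    (hfac : ∀ p, p.Prime → p ∣ a → n.factorization p = a.factorization p) :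
    partF n (blockF n a) = a := by
  conv_rhs => rw [← prod_primeFactors a ha]
  refine Finset.prod_bij (fun i _ => pp n i) ?_ ?_ ?_ ?_
  · intro i hi
    exact Nat.mem_primeFactors.mpr ⟨pp_prime n i, (mem_blockF n a i).mp hi, ha⟩
  · intro i _ j _ h
    exact pp_inj n h
  · intro p hp
    obtain ⟨hpp, hpa, -⟩ := Nat.mem_primeFactors.mp hp
    have hpn : p ∈ n.primeFactors := Nat.mem_primeFactors.mpr ⟨hpp, hpa.trans had, hn⟩
    refine ⟨pe n ⟨p, hpn⟩, ?_, ?_⟩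
    · rw [mem_blockF]
      simpa [pp, Equiv.symm_apply_apply] using hpa
    · simp [pp, Equiv.symm_apply_apply]
  · intro i hi
    rw [hfac (pp n i) (pp_prime n i) ((mem_blockF n a i).mp hi)]

lemma fact_eq_of_mem (n : ℕ) (hn : n ≠ 0) (l : List ℕ) (hprod : l.prod = n)
    (hcop : l.Pairwise Nat.Coprime) {a : ℕ} (hal : a ∈ l) (ha : a ≠ 0)
    (p : ℕ) (hp : p.Prime) (hpa : p ∣ a) : n.factorization p = a.factorization p := by
  have hperm := List.perm_cons_erase hal
  have hpc : (a :: l.erase a).Pairwise Nat.Coprime :=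
    hcop.perm hperm fun h => Nat.Coprime.symm h
  rw [List.pairwise_cons] at hpc
  have hco : Nat.Coprime a (l.erase a).prod :=
    Nat.coprime_list_prod_right_iff.mpr hpc.1
  have hmul : a * (l.erase a).prod = n := by
    rw [← hprod, ← List.prod_cons]
    exact (hperm.prod_eq).symm
  have hm0 : (l.erase a).prod ≠ 0 := by
    intro h
    rw [h, mul_zero] at hmul
    exact hn hmul.symm
  have hpm : ¬ p ∣ (l.erase a).prod := by
    intro h
    have h1 : p ∣ 1 := (Nat.dvd_gcd hpa h).trans hco.dvd
    have := Nat.eq_one_of_dvd_one h1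
    exact hp.one_lt.ne' this
  rw [← hmul, Nat.factorization_mul ha hm0]
  simp [Nat.factorization_eq_zero_of_not_dvd hpm]

end OCF


open OCF in
theorem ocf_main (n : ℕ) (hn : 2 ≤ n) :
    bigG n = fubini (omegaN n) := by
  have hn0 : n ≠ 0 := by omega
  refine Nat.card_congr ?_
  have forward : ∀ l : List ℕ, l.prod = n → (∀ a ∈ l, 1 < a) → l.Pairwise Nat.Coprime →
      (∀ s ∈ l.map (blockF n), s.Nonempty) ∧ (l.map (blockF n)).Pairwise Disjoint ∧
        (l.map (blockF n)).foldr (· ∪ ·) ∅ = (Finset.univ : Finset (Fin (omegaN n))) := by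
    intro l hprod hlt hcop
    refine ⟨?_, ?_, ?_⟩
    · intro s hs
      rw [List.mem_map] at hs
      obtain ⟨a, hal, rfl⟩ := hs
      have ha1 : 1 < a := hlt a hal
      have hpP : a.minFac.Prime := Nat.minFac_prime (by omega)
      have hpa : a.minFac ∣ a := Nat.minFac_dvd a
      have hpn : a.minFac ∈ n.primeFactors :=
        Nat.mem_primeFactors.mpr ⟨hpP, hpa.trans (hprod ▸ List.dvd_prod hal : a ∣ n), hn0⟩
      refine ⟨pe n ⟨a.minFac, hpn⟩, ?_⟩
      rw [mem_blockF]
      simpa [pp, Equiv.symm_apply_apply] using hpa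
    · refine hcop.map _ ?_
      intro a b hab
      rw [Finset.disjoint_left]
      intro i hia hib
      rw [mem_blockF] at hia hib
      have h1 : pp n i ∣ 1 := (Nat.dvd_gcd hia hib).trans hab.dvd
      exact (pp_prime n i).one_lt.ne' (Nat.eq_one_of_dvd_one h1)
    · rw [Finset.eq_univ_iff_forall]
      intro i
      rw [mem_foldr_union]
      have hdvd : pp n i ∣ l.prod := by rw [hprod]; exact Nat.dvd_of_mem_primeFactors (pp_mem n i)
      obtain ⟨a, hal, hpa⟩ := ((pp_prime n i).prime.dvd_prod_iff).mp hdvd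
      exact ⟨blockF n a, List.mem_map_of_mem hal, (mem_blockF n a i).mpr hpa⟩
  have backward : ∀ L : List (Finset (Fin (omegaN n))), (∀ s ∈ L, s.Nonempty) →
      L.Pairwise Disjoint → L.foldr (· ∪ ·) ∅ = (Finset.univ : Finset (Fin (omegaN n))) →
      (L.map (partF n)).prod = n ∧ (∀ a ∈ L.map (partF n), 1 < a) ∧
        (L.map (partF n)).Pairwise Nat.Coprime := by
    intro L hne hdisj huniv
    refine ⟨?_, ?_, ?_⟩
    · have := prod_foldr n L hdisj (fun i => pp n i ^ n.factorization (pp n i))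
      rw [huniv] at this
      rw [show L.map (partF n) = L.map (fun S => ∏ i ∈ S, pp n i ^ n.factorization (pp n i))
        from rfl, ← this]
      exact prod_univ_pp n hn0
    · intro b hb
      rw [List.mem_map] at hb
      obtain ⟨S, hS, rfl⟩ := hb
      exact one_lt_partF n (hne S hS)
    · exact hdisj.map _ (fun S T h => coprime_partF n h)
  refine
    { toFun := fun x => ⟨x.1.map (blockF n), forward x.1 x.2.1 x.2.2.1 x.2.2.2⟩
      invFun := fun y => ⟨y.1.map (partF n), backward y.1 y.2.1 y.2.2.1 y.2.2.2⟩
      left_inv := ?_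
      right_inv := ?_ }
  · rintro ⟨l, hprod, hlt, hcop⟩
    apply Subtype.ext
    simp only [List.map_map]
    conv_rhs => rw [← List.map_id l]
    apply List.map_congr_left
    intro a hal
    have ha1 : 1 < a := hlt a hal
    have had : a ∣ n := by rw [← hprod]; exact List.dvd_prod hal
    exact partF_blockF n a hn0 (by omega) had
      (fun p hp hpa => fact_eq_of_mem n hn0 l hprod hcop hal (by omega) p hp hpa)
  · rintro ⟨L, h1, h2, h3⟩
    apply Subtype.ext
    simp only [List.map_map]
    conv_rhs => rw [← List.map_id L]
    exact List.map_congr_left fun S _ => blockF_partF n S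


theorem ordered_coprime_factorizations_eq_fubini (n : ℕ) (hn : 2 ≤ n) :
    bigG n = fubini (omegaN n) := ocf_main n hn
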